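/- Let V be a finite set of n vertices, E ⊆ V × V an edge set, and let A : ℂ^V → ℂ^V be the adjacency operator with A_{ij} = χ_E(j,i). Equip ℂ^V with the normalized trace τ = (1/n)·Σᵢ, so that the counit is √n-form. Define ∇_A : ℂ^V → ℂ^V ⊗ ℂ^V by ∇_A = n⁻¹(A† ⊗ id − id ⊗ A)∘m†, where m is pointwise multiplication and † denotes GNS adjoints. Then for every f ∈ ℂ^V and (i,j) ∈ V × V one has (∇_A f)(i,j) = (f(j) − f(i))·χ_E(i,j); i.e. ∇_A agrees with the classical graph gradient (coboundary operator) extended by zero outside E. -/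
import Mathlib


open Finset

/-- For a classical directed graph `(V, E)` with adjacency operator
`A f i = ∑ j, χ_E(j,i) f j`, GNS adjoint `A†` (w.r.t. the normalized trace inner
product), and comultiplication `m†(f)(i,j) = n·f(i)·δ_{ij}` (where `n = |V|`), the
quantum graph gradient `∇_A = n⁻¹ (A† ⊗ id − id ⊗ A) ∘ m†` satisfies
`∇_A f (i,j) = (f j − f i)·χ_E(i,j)`, i.e. it is the classical coboundary operator
extended by zero outside `E`. -/
theorem classical_gradient
    (V : Type*) [Fintype V] [DecidableEq V]
    (E : Finset (V × V))
    (A Adag : (V → ℂ) →ₗ[ℂ] (V → ℂ))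
    (hA : ∀ (f : V → ℂ) (i : V), A f i = ∑ j, (if (j, i) ∈ E then 1 else 0) * f j)
    (hAdag : ∀ f g : V → ℂ,
      (∑ i, starRingEnd ℂ (A f i) * g i) = ∑ i, starRingEnd ℂ (f i) * Adag g i)
    (f : V → ℂ) (i j : V) :
    ((Fintype.card V : ℂ))⁻¹ *
        (Adag (fun k => if k = j then (Fintype.card V : ℂ) * f k else 0) i
          - A (fun k => if i = k then (Fintype.card V : ℂ) * f k else 0) j)
      = (f j - f i) * (if (i, j) ∈ E then 1 else 0) := by
  have hn : (Fintype.card V : ℂ) ≠ 0 := by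
    have : 0 < Fintype.card V := Fintype.card_pos_iff.mpr ⟨i⟩
    exact_mod_cast Nat.cast_ne_zero.mpr this.ne'
  have hAd : ∀ (g : V → ℂ) (i0 : V),
      Adag g i0 = ∑ k, (if (i0, k) ∈ E then 1 else 0) * g k := by
    intro g i0
    have h := hAdag (fun k => if k = i0 then 1 else 0) g
    have hR : (∑ k, starRingEnd ℂ (if k = i0 then (1:ℂ) else 0) * Adag g k)
        = Adag g i0 := by
      rw [Finset.sum_eq_single i0]
      · simp
      · intro b _ hb; simp [hb]
      · intro hb; exact absurd (Finset.mem_univ i0) hb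
    rw [hR] at h
    rw [← h]
    apply Finset.sum_congr rfl
    intro k _
    rw [hA]
    have : (∑ l, (if (l, k) ∈ E then (1:ℂ) else 0) * (if l = i0 then 1 else 0))
        = (if (i0, k) ∈ E then 1 else 0) := by
      rw [Finset.sum_eq_single i0]
      · simp
      · intro b _ hb; simp [hb]
      · intro hb; exact absurd (Finset.mem_univ i0) hb
    rw [this]
    split <;> simp
  rw [hAd, hA]
  have h1 : (∑ k, (if (i, k) ∈ E then (1:ℂ) else 0) *
      (if k = j then (Fintype.card V : ℂ) * f k else 0))
      = (if (i, j) ∈ E then 1 else 0) * ((Fintype.card V : ℂ) * f j) := by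
    rw [Finset.sum_eq_single j]
    · simp
    · intro b _ hb; simp [hb]
    · intro hb; exact absurd (Finset.mem_univ j) hb
  have h2 : (∑ k, (if (k, j) ∈ E then (1:ℂ) else 0) *
      (if i = k then (Fintype.card V : ℂ) * f k else 0))
      = (if (i, j) ∈ E then 1 else 0) * ((Fintype.card V : ℂ) * f i) := by
    rw [Finset.sum_eq_single i]
    · simp
    · intro b _ hb; simp [Ne.symm hb]
    · intro hb; exact absurd (Finset.mem_univ i) hb
  rw [h1, h2]
  split <;> field_simp <;> ring
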